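/- Fix an integer n > 1 and a real δ > 0, and let G be the simple graph on vertex set {x_1,…,x_{2n+2}} whose edge set makes {x_1,x_2,x_3,x_4} a complete component and makes each pair {x_{2t+3}, x_{2t+4}} for t = 1,…,n−1 a complete two-vertex component (so G has q = n connected components, each of diameter 1). Let K^{(δ)} be the (2n+2)×(2n+2) block-diagonal matrix with all entries divided by 4+2δ, whose top-left 4×4 block has rows (1+δ, 1+δ, 1, 1), (1, 1+δ, 1+δ, 1), (1, 1, 1+δ, 1+δ), (1+δ, 1, 1, 1+δ), whose remaining n−1 diagonal 2×2 blocks each equal ((2+2δ, 2),(2, 2+2δ)), and which is zero elsewhere. Then: (i) K^{(δ)} is a channel matrix; (ii) K^{(δ)} satisfies (ε(δ),G)-Blowfish privacy with ε(δ) = log(1+δ); and (iii) under the uniform input prior its min-entropy leakage equals I_∞(X; K^{(δ)}(X)) = log( (4(1+δ) + (2n−2)(2+2δ)) / (4+2δ) ). -/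

import Mathlib

set_option maxHeartbeats 1000000

/-- Sum of a function on `Fin m` supported on the first four indices. -/
lemma sum_four_support {m : ℕ} (hm : 4 ≤ m) (f : Fin m → ℝ)
    (h : ∀ j : Fin m, 4 ≤ j.val → f j = 0) :
    ∑ j, f j = f ⟨0, by omega⟩ + f ⟨1, by omega⟩ + f ⟨2, by omega⟩ + f ⟨3, by omega⟩ := by
  have hsub : ({⟨0, by omega⟩, ⟨1, by omega⟩, ⟨2, by omega⟩, ⟨3, by omega⟩} :
      Finset (Fin m)) ⊆ Finset.univ := Finset.subset_univ _
  rw [← Finset.sum_subset hsub (fun x _ hx => by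
    apply h
    simp only [Finset.mem_insert, Finset.mem_singleton, Fin.ext_iff] at hx
    omega)]
  rw [Finset.sum_insert (by simp [Fin.ext_iff]), Finset.sum_insert (by simp [Fin.ext_iff]),
    Finset.sum_insert (by simp [Fin.ext_iff]), Finset.sum_singleton]
  ring

/-- Sum of a function on `Fin m` supported on two indices. -/
lemma sum_two_support {m : ℕ} (f : Fin m → ℝ) (a b : Fin m) (hab : a ≠ b)
    (h : ∀ j, j ≠ a → j ≠ b → f j = 0) :
    ∑ j, f j = f a + f b := by
  have hsub : ({a, b} : Finset (Fin m)) ⊆ Finset.univ := Finset.subset_univ _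
  rw [← Finset.sum_subset hsub (fun x _ hx => by
    simp only [Finset.mem_insert, Finset.mem_singleton] at hx
    push_neg at hx
    exact h x hx.1 hx.2)]
  exact Finset.sum_pair hab



/-- The graph of the tightness construction on `2n+2` vertices: vertices `0,1,2,3`
form a complete connected component, and for each `t = 1, …, n-1` the pair
`{2t+2, 2t+3}` forms a complete two-vertex component (so there are `n` connected
components, each of diameter 1). -/
def tightnessGraph (n : ℕ) : SimpleGraph (Fin (2 * n + 2)) where
  Adj i j := i ≠ j ∧
    ((i.val < 4 ∧ j.val < 4) ∨ (4 ≤ i.val ∧ 4 ≤ j.val ∧ i.val / 2 = j.val / 2))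
  symm := by
    constructor
    rintro i j ⟨hij, h⟩
    refine ⟨hij.symm, ?_⟩
    rcases h with ⟨h1, h2⟩ | ⟨h1, h2, h3⟩
    · exact Or.inl ⟨h2, h1⟩
    · exact Or.inr ⟨h2, h1, h3.symm⟩
  loopless := ⟨fun i h => h.1 rfl⟩

/-- The channel matrix of the tightness construction: a block-diagonal matrix whose
top-left `4×4` block has rows `(1+δ,1+δ,1,1)`, `(1,1+δ,1+δ,1)`, `(1,1,1+δ,1+δ)`,
`(1+δ,1,1,1+δ)`, whose remaining `n-1` diagonal `2×2` blocks equal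
`((2+2δ, 2), (2, 2+2δ))`, which is zero elsewhere, and all of whose entries are
divided by `4+2δ`. -/
noncomputable def tightnessMatrix (n : ℕ) (δ : ℝ) :
    Fin (2 * n + 2) → Fin (2 * n + 2) → ℝ := fun i j =>
  (if i.val < 4 ∧ j.val < 4 then
      (if j.val = i.val ∨ j.val = (i.val + 1) % 4 then 1 + δ else 1)
    else if 4 ≤ i.val ∧ 4 ≤ j.val ∧ i.val / 2 = j.val / 2 then
      (if i = j then 2 + 2 * δ else 2)
    else 0) / (4 + 2 * δ)

/-- Properties of the tightness construction: for `n > 1` and `δ > 0`,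
(i) `K^{(δ)}` is a channel matrix; (ii) `K^{(δ)}` satisfies
`(ε(δ), G)`-Blowfish privacy with `ε(δ) = log(1+δ)` for the `n`-component graph `G`;
and (iii) the min-entropy leakage under the uniform prior,
`log(∑_j max_i K_{i,j})`, equals `log((4(1+δ) + (2n-2)(2+2δ)) / (4+2δ))`. -/
theorem tightness_construction (n : ℕ) (hn : 1 < n) (δ : ℝ) (hδ : 0 < δ) :
    (∀ i j, 0 ≤ tightnessMatrix n δ i j) ∧
      (∀ i, ∑ j, tightnessMatrix n δ i j = 1) ∧
      (∀ i h : Fin (2 * n + 2), (tightnessGraph n).Adj i h →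
        ∀ j, tightnessMatrix n δ i j
          ≤ Real.exp (Real.log (1 + δ)) * tightnessMatrix n δ h j) ∧
      Real.log (∑ j, Finset.univ.sup' ⟨⟨0, by omega⟩, Finset.mem_univ _⟩
          (fun i : Fin (2 * n + 2) => tightnessMatrix n δ i j))
        = Real.log ((4 * (1 + δ) + (2 * (n : ℝ) - 2) * (2 + 2 * δ)) / (4 + 2 * δ)) := by
  have hd : (0:ℝ) < 4 + 2 * δ := by linarith
  have hm : 4 ≤ 2 * n + 2 := by omega
  refine ⟨?_, ?_, ?_, ?_⟩
  · -- nonnegativity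
    intro i j
    unfold tightnessMatrix
    apply div_nonneg _ hd.le
    split_ifs <;> linarith
  · -- row sums
    intro i
    by_cases hi : i.val < 4
    · rw [sum_four_support hm _ (fun j hj => by
        simp only [tightnessMatrix]
        rw [if_neg (by omega), if_neg (by omega), zero_div])]
      have hi' : i.val = 0 ∨ i.val = 1 ∨ i.val = 2 ∨ i.val = 3 := by omega
      rcases hi' with h0 | h0 | h0 | h0 <;>
        · simp only [tightnessMatrix, h0]
          norm_num
          field_simp
          ring
    · push_neg at hi
      have hilt : i.val < 2 * n + 2 := i.isLt
      obtain ⟨a, ha⟩ : ∃ a : Fin (2 * n + 2), a.val = 2 * (i.val / 2) :=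
        ⟨⟨2 * (i.val / 2), by omega⟩, rfl⟩
      obtain ⟨b, hb⟩ : ∃ b : Fin (2 * n + 2), b.val = 2 * (i.val / 2) + 1 :=
        ⟨⟨2 * (i.val / 2) + 1, by omega⟩, rfl⟩
      have hab : a ≠ b := fun hab => by rw [Fin.ext_iff] at hab; omega
      rw [sum_two_support _ a b hab (fun j hja hjb => by
        have h1 : j.val ≠ a.val := fun hh => hja (Fin.ext hh)
        have h2 : j.val ≠ b.val := fun hh => hjb (Fin.ext hh)
        simp only [tightnessMatrix]
        rw [if_neg (by omega), if_neg (by omega), zero_div])]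
      have hpar : i.val % 2 = 0 ∨ i.val % 2 = 1 := by omega
      rcases hpar with hp | hp
      · have hia : i = a := Fin.ext (by omega)
        have hib : i ≠ b := fun hh => by rw [Fin.ext_iff] at hh; omega
        have e1 : tightnessMatrix n δ i a = (2 + 2 * δ) / (4 + 2 * δ) := by
          simp only [tightnessMatrix]
          rw [if_neg (by omega), if_pos (show 4 ≤ i.val ∧ 4 ≤ a.val ∧
            i.val / 2 = a.val / 2 by omega), if_pos hia]
        have e2 : tightnessMatrix n δ i b = 2 / (4 + 2 * δ) := by
          simp only [tightnessMatrix]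
          rw [if_neg (by omega), if_pos (show 4 ≤ i.val ∧ 4 ≤ b.val ∧
            i.val / 2 = b.val / 2 by omega), if_neg hib]
        rw [e1, e2, ← add_div, div_eq_one_iff_eq hd.ne']
        ring
      · have hib : i = b := Fin.ext (by omega)
        have hia : i ≠ a := fun hh => by rw [Fin.ext_iff] at hh; omega
        have e1 : tightnessMatrix n δ i a = 2 / (4 + 2 * δ) := by
          simp only [tightnessMatrix]
          rw [if_neg (by omega), if_pos (show 4 ≤ i.val ∧ 4 ≤ a.val ∧
            i.val / 2 = a.val / 2 by omega), if_neg hia]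
        have e2 : tightnessMatrix n δ i b = (2 + 2 * δ) / (4 + 2 * δ) := by
          simp only [tightnessMatrix]
          rw [if_neg (by omega), if_pos (show 4 ≤ i.val ∧ 4 ≤ b.val ∧
            i.val / 2 = b.val / 2 by omega), if_pos hib]
        rw [e1, e2, ← add_div, div_eq_one_iff_eq hd.ne']
        ring
  · -- Blowfish privacy
    intro i h hadj j
    obtain ⟨hne, hc⟩ := hadj
    rw [Real.exp_log (by linarith)]
    simp only [tightnessMatrix]
    rw [← mul_div_assoc, div_le_div_iff_of_pos_right hd]
    rcases hc with ⟨hi4, hh4⟩ | ⟨hi4, hh4, hih⟩ <;>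
      split_ifs <;> first | (exfalso; omega) | linarith | nlinarith
  · -- min-entropy leakage
    have hjj : ∀ j : Fin (2 * n + 2), tightnessMatrix n δ j j
        = (if j.val < 4 then 1 + δ else 2 + 2 * δ) / (4 + 2 * δ) := by
      intro j
      simp only [tightnessMatrix]
      by_cases hj : j.val < 4
      · simp [hj]
      · simp [hj, show (4:ℕ) ≤ j.val by omega]
    have hsup : ∀ j : Fin (2 * n + 2),
        Finset.univ.sup' ⟨⟨0, by omega⟩, Finset.mem_univ _⟩
          (fun i : Fin (2 * n + 2) => tightnessMatrix n δ i j)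
        = tightnessMatrix n δ j j := by
      intro j
      apply le_antisymm
      · apply Finset.sup'_le
        intro i _
        rw [hjj j]
        simp only [tightnessMatrix]
        rw [div_le_div_iff_of_pos_right hd]
        split_ifs <;> first | (exfalso; omega) | linarith | nlinarith
      · exact Finset.le_sup' (fun i => tightnessMatrix n δ i j) (Finset.mem_univ j)
    have hs : (∑ j, Finset.univ.sup' ⟨⟨0, by omega⟩, Finset.mem_univ _⟩
          (fun i : Fin (2 * n + 2) => tightnessMatrix n δ i j))
        = (4 * (1 + δ) + (2 * (n : ℝ) - 2) * (2 + 2 * δ)) / (4 + 2 * δ) := by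
      have step1 : (∑ j, Finset.univ.sup' ⟨⟨0, by omega⟩, Finset.mem_univ _⟩
            (fun i : Fin (2 * n + 2) => tightnessMatrix n δ i j))
          = ∑ j : Fin (2 * n + 2), ((2 + 2 * δ) / (4 + 2 * δ)
            + if j.val < 4 then (1 + δ) / (4 + 2 * δ) - (2 + 2 * δ) / (4 + 2 * δ) else 0) := by
        refine Finset.sum_congr rfl fun j _ => ?_
        rw [hsup j, hjj j]
        split_ifs <;> ring
      rw [step1, Finset.sum_add_distrib, Finset.sum_const, Finset.card_univ,
        Fintype.card_fin,
        sum_four_support hm _ (fun j hj => if_neg (by omega))]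
      norm_num
      field_simp
      ring
    rw [hs]
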